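/- arXiv:2310.04581 — 2 statements merged into one kernel-verified Lean document; each statement's English description precedes it below -/
import Mathlib

section
/- Let M be a nonzero p×q matrix over ℕ. (a) Define C*_1(M) to be the multiset of all (i,j) ∈ msupp(M) such that every (i',j') ∈ supp(M) satisfies i' ≥ i or j' ≤ j, and recursively let C*_{m+1} be C*_1 applied to the multiset obtained from msupp(M) by removing C*_1,…,C*_m. Then the underlying set of each nonempty C*_m is a maximal chain (with respect to the order of P_GL(p,q)) in the support of the remaining multiset, and the number of nonempty C*_m equals the width of supp(M). (b) Define D_1(M) to be the set of minimal elements of supp(M) in P_GL(p,q), and recursively let D_{m+1} be the set of minimal elements of the support of the multiset obtained from msupp(M) by removing one copy of each element of D_1,…,D_m. Then each nonempty D_m is a maximal antichain in the support of the remaining multiset, the number of nonempty D_m equals the height of msupp(M), and for every m the upper order ideal of P_GL(p,q) generated by D_m contains the upper order ideal generated by D_{m+1}. -/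
/-!
STATEMENT 3: the chain decomposition `C*_m` and the antichain decomposition `D_m`
of the multisupport of a nonzero `p × q` matrix over `ℕ`, in the poset `P_GL(p,q)`.
-/

open scoped Classical

noncomputable section

/-- The support of a matrix over `ℕ`. -/
def matSupp {p q : ℕ} (M : Matrix (Fin p) (Fin q) ℕ) : Set (Fin p × Fin q) :=
  {x | M x.1 x.2 ≠ 0}

/-- The order relation of the poset `P_GL(p,q)`: `(i,j) ≤ (i',j')` iff `i ≤ i'` and `j ≤ j'`. -/
def rGL {p q : ℕ} (a b : Fin p × Fin q) : Prop :=
  a.1 ≤ b.1 ∧ a.2 ≤ b.2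

/-- Width of a subset `S` of a poset (with order relation `r`): the maximum
cardinality of an antichain contained in `S`. -/
def relWidth {α : Type*} (r : α → α → Prop) (S : Set α) : ℕ :=
  sSup {n | ∃ A : Finset α, ↑A ⊆ S ∧ IsAntichain r ↑A ∧ A.card = n}

/-- Height of the multisupport of a matrix `M` with respect to the order relation `r`:
the maximum total multiplicity of a chain contained in its underlying set. -/
def msuppHeight {p q : ℕ} (r : Fin p × Fin q → Fin p × Fin q → Prop)
    (M : Matrix (Fin p) (Fin q) ℕ) : ℕ :=
  sSup {m | ∃ C : Finset (Fin p × Fin q), ↑C ⊆ matSupp M ∧ IsChain r ↑C ∧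
    ∑ x ∈ C, M x.1 x.2 = m}

/-- `C*₁(M)`: the set of all `(i,j)` in the multisupport of `M` such that every
`(i',j')` in the support of `M` satisfies `i' ≥ i` or `j' ≤ j`. -/
def cStep {p q : ℕ} (M : Matrix (Fin p) (Fin q) ℕ) : Set (Fin p × Fin q) :=
  {x | M x.1 x.2 ≠ 0 ∧ ∀ y : Fin p × Fin q, M y.1 y.2 ≠ 0 → x.1 ≤ y.1 ∨ y.2 ≤ x.2}

/-- The matrix recording the multiset obtained from `msupp M` after removing
`C*₁, …, C*ₘ` (each `C*` removes all copies of its elements). -/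
def cMat {p q : ℕ} (M : Matrix (Fin p) (Fin q) ℕ) : ℕ → Matrix (Fin p) (Fin q) ℕ
  | 0 => M
  | m + 1 => fun i j => if (i, j) ∈ cStep (cMat M m) then 0 else cMat M m i j

/-- `D₁(M)`: the set of minimal elements of the support of `M` in `P_GL(p,q)`. -/
def dStep {p q : ℕ} (M : Matrix (Fin p) (Fin q) ℕ) : Set (Fin p × Fin q) :=
  {x | M x.1 x.2 ≠ 0 ∧ ∀ y : Fin p × Fin q, M y.1 y.2 ≠ 0 → rGL y x → y = x}

/-- The matrix recording the multiset obtained from `msupp M` after removing one copy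
of each element of `D₁, …, Dₘ`. -/
def dMat {p q : ℕ} (M : Matrix (Fin p) (Fin q) ℕ) : ℕ → Matrix (Fin p) (Fin q) ℕ
  | 0 => M
  | m + 1 => fun i j => if (i, j) ∈ dStep (dMat M m) then dMat M m i j - 1 else dMat M m i j

/-- The upper order ideal generated by a subset `S` of `P_GL(p,q)`. -/
def upIdeal {p q : ℕ} (S : Set (Fin p × Fin q)) : Set (Fin p × Fin q) :=
  {z | ∃ x ∈ S, rGL x z}

section Aux

variable {p q : ℕ}

lemma rGL_eq_le (a b : Fin p × Fin q) : rGL a b ↔ a ≤ b := Iff.rfl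

/-! ### Width generalities -/

lemma widthSet_bdd {α : Type*} [Fintype α] (r : α → α → Prop) (S : Set α) :
    BddAbove {n | ∃ A : Finset α, ↑A ⊆ S ∧ IsAntichain r ↑A ∧ A.card = n} :=
  ⟨Fintype.card α, by rintro n ⟨A, -, -, rfl⟩; exact A.card_le_univ⟩

lemma widthSet_nonempty {α : Type*} [Fintype α] (r : α → α → Prop) (S : Set α) :
    {n | ∃ A : Finset α, ↑A ⊆ S ∧ IsAntichain r ↑A ∧ A.card = n}.Nonempty :=
  ⟨0, ∅, by simp, by simp [IsAntichain], by simp⟩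

lemma relWidth_spec {α : Type*} [Fintype α] (r : α → α → Prop) (S : Set α) :
    ∃ A : Finset α, ↑A ⊆ S ∧ IsAntichain r ↑A ∧ A.card = relWidth r S :=
  Nat.sSup_mem (widthSet_nonempty r S) (widthSet_bdd r S)

lemma card_le_relWidth {α : Type*} [Fintype α] {r : α → α → Prop} {S : Set α}
    {A : Finset α} (h1 : ↑A ⊆ S) (h2 : IsAntichain r ↑A) : A.card ≤ relWidth r S :=
  le_csSup (widthSet_bdd r S) ⟨A, h1, h2, rfl⟩

lemma relWidth_empty {α : Type*} [Fintype α] (r : α → α → Prop) :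
    relWidth r (∅ : Set α) = 0 := by
  refine Nat.eq_zero_of_le_zero (csSup_le (widthSet_nonempty r ∅) ?_)
  rintro n ⟨A, hA, -, rfl⟩
  simpa using Finset.card_eq_zero.2 (by simpa using hA)

lemma one_le_relWidth {α : Type*} [Fintype α] (r : α → α → Prop) {S : Set α}
    (hS : S.Nonempty) : 1 ≤ relWidth r S := by
  obtain ⟨x, hx⟩ := hS
  have := card_le_relWidth (A := {x}) (r := r) (S := S) (by simpa using hx)
    (by simp [IsAntichain, Set.pairwise_singleton])
  simpa using this

lemma relWidth_pos_iff {α : Type*} [Fintype α] (r : α → α → Prop) (S : Set α) :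
    0 < relWidth r S ↔ S.Nonempty := by
  constructor
  · intro h
    obtain ⟨A, hA, -, hc⟩ := relWidth_spec r S
    obtain ⟨x, hx⟩ := Finset.card_pos.1 (hc ▸ h)
    exact ⟨x, hA hx⟩
  · exact one_le_relWidth r

/-! ### cStep basics -/

lemma cStep_subset (N : Matrix (Fin p) (Fin q) ℕ) : cStep N ⊆ matSupp N :=
  fun _ hx => hx.1

lemma cStep_chain (N : Matrix (Fin p) (Fin q) ℕ) : IsChain rGL (cStep N) := by
  intro a ha b hb _
  rcases ha.2 b hb.1 with h1 | h1 <;> rcases hb.2 a ha.1 with h2 | h2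
  · rcases le_total a.2 b.2 with h3 | h3
    · exact Or.inl ⟨h1, h3⟩
    · exact Or.inr ⟨h2, h3⟩
  · exact Or.inl ⟨h1, h2⟩
  · exact Or.inr ⟨h2, h1⟩
  · rcases le_total a.1 b.1 with h3 | h3
    · exact Or.inl ⟨h3, h2⟩
    · exact Or.inr ⟨h3, h1⟩

lemma cStep_nonempty {N : Matrix (Fin p) (Fin q) ℕ} (h : (matSupp N).Nonempty) :
    (cStep N).Nonempty := by
  obtain ⟨x, hx⟩ := h
  have hT : (Finset.univ.filter (fun y : Fin p × Fin q => N y.1 y.2 ≠ 0)).Nonempty :=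
    ⟨x, by simpa [Finset.mem_filter, matSupp] using hx⟩
  obtain ⟨z, hz, hmin⟩ := Finset.exists_min_image _ Prod.fst hT
  refine ⟨z, (Finset.mem_filter.1 hz).2, fun y hy => Or.inl (hmin y ?_)⟩
  exact Finset.mem_filter.2 ⟨Finset.mem_univ _, hy⟩

/-- If `x` is in the support but not in `cStep`, there is an element of `cStep`
incomparable to `x`. -/
lemma exists_cStep_incomp {N : Matrix (Fin p) (Fin q) ℕ} {x : Fin p × Fin q}
    (hx : x ∈ matSupp N) (hx' : x ∉ cStep N) :
    ∃ z ∈ cStep N, z.1 < x.1 ∧ x.2 < z.2 := by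
  have : ∃ y : Fin p × Fin q, N y.1 y.2 ≠ 0 ∧ y.1 < x.1 ∧ x.2 < y.2 := by
    by_contra hcon
    push_neg at hcon
    refine hx' ⟨hx, fun y hy => ?_⟩
    rcases lt_or_ge y.1 x.1 with h | h
    · exact Or.inr (hcon y hy h)
    · exact Or.inl h
  obtain ⟨y0, hy0⟩ := this
  set T := Finset.univ.filter
    (fun y : Fin p × Fin q => N y.1 y.2 ≠ 0 ∧ y.1 < x.1 ∧ x.2 < y.2) with hT
  have hTne : T.Nonempty := ⟨y0, Finset.mem_filter.2 ⟨Finset.mem_univ _, hy0⟩⟩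
  obtain ⟨z, hz, hmin⟩ := Finset.exists_min_image T Prod.fst hTne
  obtain ⟨-, hzsupp, hz1, hz2⟩ :
      z ∈ Finset.univ ∧ N z.1 z.2 ≠ 0 ∧ z.1 < x.1 ∧ x.2 < z.2 := by
    simpa [hT, Finset.mem_filter, and_assoc] using hz
  refine ⟨z, ⟨hzsupp, fun w hw => ?_⟩, hz1, hz2⟩
  by_contra hcon
  push_neg at hcon
  obtain ⟨hw1, hw2⟩ := hcon
  have hwT : w ∈ T := Finset.mem_filter.2
    ⟨Finset.mem_univ _, hw, hw1.trans hz1, hz2.trans hw2⟩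
  exact absurd (hmin w hwT) (not_le.2 hw1)

/-- Every maximum-size antichain in the support meets `cStep`. -/
lemma maxAntichain_meets_cStep {N : Matrix (Fin p) (Fin q) ℕ} {A : Finset (Fin p × Fin q)}
    (hA : ↑A ⊆ matSupp N) (hAc : IsAntichain rGL (↑A : Set (Fin p × Fin q)))
    (hcard : A.card = relWidth rGL (matSupp N)) (hne : A.Nonempty) :
    ∃ a ∈ A, a ∈ cStep N := by
  obtain ⟨a, ha, hmin⟩ := Finset.exists_min_image A Prod.fst hne
  refine ⟨a, ha, ?_⟩
  by_contra hcon
  obtain ⟨y, hy, hy1, hy2⟩ := exists_cStep_incomp (hA ha) hcon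
  -- every element of A is strictly "below-right" of y
  have key : ∀ b ∈ A, y.1 < b.1 ∧ b.2 < y.2 := by
    intro b hb
    by_cases hba : b = a
    · exact hba ▸ ⟨hy1, hy2⟩
    · have h1 : a.1 ≤ b.1 := hmin b hb
      have h2 : b.2 < a.2 := by
        by_contra h2
        exact hAc ha hb (Ne.symm hba) ⟨h1, not_lt.1 h2⟩
      exact ⟨lt_of_lt_of_le hy1 h1, h2.trans hy2⟩
  have hyA : y ∉ A := fun h => absurd (key y h).1 (lt_irrefl _)
  have hanti : IsAntichain rGL (↑(insert y A) : Set (Fin p × Fin q)) := by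
    rw [Finset.coe_insert]
    exact hAc.insert (fun b hb _ hr => absurd hr.1 (not_le.2 (key b hb).1))
      (fun b hb _ hr => absurd hr.2 (not_le.2 (key b hb).2))
  have hsub : ↑(insert y A) ⊆ matSupp N := by
    rw [Finset.coe_insert]
    rintro u (rfl | hu)
    · exact (cStep_subset N) hy
    · exact hA hu
  have := card_le_relWidth hsub hanti
  rw [Finset.card_insert_of_notMem hyA, hcard] at this
  omega

lemma matSupp_cMat_succ (M : Matrix (Fin p) (Fin q) ℕ) (m : ℕ) :
    matSupp (cMat M (m + 1)) = matSupp (cMat M m) \ cStep (cMat M m) := by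
  ext ⟨i, j⟩
  by_cases h : (i, j) ∈ cStep (cMat M m)
  · simp [matSupp, cMat, h]
  · simp [matSupp, cMat, h]

/-- The width drops by exactly one when `cStep` is removed. -/
lemma width_cMat_step {N : Matrix (Fin p) (Fin q) ℕ} (hne : (matSupp N).Nonempty) :
    relWidth rGL (matSupp N \ cStep N) + 1 = relWidth rGL (matSupp N) := by
  set w := relWidth rGL (matSupp N) with hw
  have hw1 : 1 ≤ w := one_le_relWidth _ hne
  have hle : relWidth rGL (matSupp N \ cStep N) < w := by
    obtain ⟨A, hA, hAc, hcard⟩ := relWidth_spec rGL (matSupp N \ cStep N)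
    have hA' : ↑A ⊆ matSupp N := hA.trans Set.diff_subset
    have hle' : A.card ≤ w := card_le_relWidth hA' hAc
    rcases lt_or_eq_of_le hle' with h | h
    · omega
    · exfalso
      have hAne : A.Nonempty := Finset.card_pos.1 (by omega)
      obtain ⟨a, haA, hac⟩ := maxAntichain_meets_cStep hA' hAc h hAne
      exact (hA haA).2 hac
  have hge : w - 1 ≤ relWidth rGL (matSupp N \ cStep N) := by
    obtain ⟨A, hA, hAc, hcard⟩ := relWidth_spec rGL (matSupp N)
    have hAne : A.Nonempty := Finset.card_pos.1 (by omega)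
    obtain ⟨a, haA, hac⟩ := maxAntichain_meets_cStep hA hAc hcard hAne
    have hsub : ↑(A.erase a) ⊆ matSupp N \ cStep N := by
      intro b hb
      obtain ⟨hba, hbA⟩ := Finset.mem_erase.1 (by exact_mod_cast hb)
      refine ⟨hA hbA, fun hbc => ?_⟩
      rcases cStep_chain N hbc hac hba with h | h
      · exact hAc hbA haA hba h
      · exact hAc haA hbA (Ne.symm hba) h
    have hAc' : IsAntichain rGL (↑(A.erase a) : Set (Fin p × Fin q)) :=
      hAc.subset (by simp [Finset.coe_subset, Finset.erase_subset])
    have := card_le_relWidth hsub hAc'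
    rw [Finset.card_erase_of_mem haA, hcard] at this
    exact this
  omega

lemma width_cMat (M : Matrix (Fin p) (Fin q) ℕ) (m : ℕ) :
    relWidth rGL (matSupp (cMat M m)) = relWidth rGL (matSupp M) - m := by
  induction m with
  | zero => simp [cMat]
  | succ m ih =>
    rw [matSupp_cMat_succ]
    by_cases h : (matSupp (cMat M m)).Nonempty
    · have := width_cMat_step h
      omega
    · have he : matSupp (cMat M m) = ∅ := Set.not_nonempty_iff_eq_empty.1 h
      have h0 : relWidth rGL (matSupp (cMat M m)) = 0 := by
        rw [he]; exact relWidth_empty _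
      rw [he, Set.empty_diff, relWidth_empty]
      omega

lemma cStep_nonempty_iff (M : Matrix (Fin p) (Fin q) ℕ) (m : ℕ) :
    (cStep (cMat M m)).Nonempty ↔ m < relWidth rGL (matSupp M) := by
  have h1 : (cStep (cMat M m)).Nonempty ↔ (matSupp (cMat M m)).Nonempty :=
    ⟨fun h => h.mono (cStep_subset _), fun h => cStep_nonempty h⟩
  rw [h1, ← relWidth_pos_iff rGL, width_cMat]
  omega

/-! ### dStep basics -/

lemma dStep_subset (N : Matrix (Fin p) (Fin q) ℕ) : dStep N ⊆ matSupp N :=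
  fun _ hx => hx.1

lemma dStep_antichain (N : Matrix (Fin p) (Fin q) ℕ) : IsAntichain rGL (dStep N) :=
  fun _ ha _ hb hne hr => hne (hb.2 _ ha.1 hr)

lemma exists_dStep_le {N : Matrix (Fin p) (Fin q) ℕ} {x : Fin p × Fin q}
    (hx : x ∈ matSupp N) : ∃ d ∈ dStep N, rGL d x := by
  set T := Finset.univ.filter
    (fun y : Fin p × Fin q => N y.1 y.2 ≠ 0 ∧ rGL y x) with hT
  have hTne : T.Nonempty :=
    ⟨x, Finset.mem_filter.2 ⟨Finset.mem_univ _, hx, (rGL_eq_le x x).2 le_rfl⟩⟩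
  obtain ⟨d, hd, hmin⟩ := T.exists_minimal hTne
  obtain ⟨-, hds, hdx⟩ : d ∈ Finset.univ ∧ N d.1 d.2 ≠ 0 ∧ rGL d x := by
    simpa [hT, Finset.mem_filter, and_assoc] using hd
  refine ⟨d, ⟨hds, fun y hy hyd => ?_⟩, hdx⟩
  have hyd' : y ≤ d := (rGL_eq_le y d).1 hyd
  have hyx : rGL y x := (rGL_eq_le y x).2 (hyd'.trans ((rGL_eq_le d x).1 hdx))
  have hyT : y ∈ T := Finset.mem_filter.2 ⟨Finset.mem_univ _, hy, hyx⟩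
  exact le_antisymm hyd' (hmin hyT hyd')

lemma dStep_nonempty {N : Matrix (Fin p) (Fin q) ℕ} (h : (matSupp N).Nonempty) :
    (dStep N).Nonempty := by
  obtain ⟨x, hx⟩ := h
  obtain ⟨d, hd, -⟩ := exists_dStep_le hx
  exact ⟨d, hd⟩

lemma matSupp_dMat_succ_subset (M : Matrix (Fin p) (Fin q) ℕ) (m : ℕ) :
    matSupp (dMat M (m + 1)) ⊆ matSupp (dMat M m) := by
  rintro ⟨i, j⟩ hx
  by_cases h : (i, j) ∈ dStep (dMat M m)
  · exact h.1
  · simpa [matSupp, dMat, h] using hx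

/-! ### Height generalities -/

lemma heightSet_bdd (N : Matrix (Fin p) (Fin q) ℕ) :
    BddAbove {m | ∃ C : Finset (Fin p × Fin q), (↑C : Set (Fin p × Fin q)) ⊆ matSupp N ∧
      IsChain rGL (↑C : Set (Fin p × Fin q)) ∧ ∑ x ∈ C, N x.1 x.2 = m} := by
  refine ⟨∑ x : Fin p × Fin q, N x.1 x.2, ?_⟩
  rintro n ⟨C, -, -, rfl⟩
  exact Finset.sum_le_sum_of_subset (C.subset_univ)

lemma heightSet_nonempty (N : Matrix (Fin p) (Fin q) ℕ) :
    {m | ∃ C : Finset (Fin p × Fin q), (↑C : Set (Fin p × Fin q)) ⊆ matSupp N ∧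
      IsChain rGL (↑C : Set (Fin p × Fin q)) ∧ ∑ x ∈ C, N x.1 x.2 = m}.Nonempty :=
  ⟨0, ∅, by simp, by simp [IsChain], by simp⟩

lemma msuppHeight_spec (N : Matrix (Fin p) (Fin q) ℕ) :
    ∃ C : Finset (Fin p × Fin q), (↑C : Set (Fin p × Fin q)) ⊆ matSupp N ∧
      IsChain rGL (↑C : Set (Fin p × Fin q)) ∧ ∑ x ∈ C, N x.1 x.2 = msuppHeight rGL N :=
  Nat.sSup_mem (heightSet_nonempty N) (heightSet_bdd N)

lemma sum_le_msuppHeight {N : Matrix (Fin p) (Fin q) ℕ} {C : Finset (Fin p × Fin q)}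
    (h1 : ↑C ⊆ matSupp N) (h2 : IsChain rGL (↑C : Set (Fin p × Fin q))) :
    ∑ x ∈ C, N x.1 x.2 ≤ msuppHeight rGL N :=
  le_csSup (heightSet_bdd N) ⟨C, h1, h2, rfl⟩

lemma msuppHeight_empty {N : Matrix (Fin p) (Fin q) ℕ} (h : matSupp N = ∅) :
    msuppHeight rGL N = 0 := by
  refine Nat.eq_zero_of_le_zero (csSup_le (heightSet_nonempty N) ?_)
  rintro n ⟨C, hC, -, rfl⟩
  have : C = ∅ := by
    rw [h] at hC
    exact Finset.coe_eq_empty.1 (Set.subset_empty_iff.1 hC)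
  simp [this]

lemma one_le_msuppHeight {N : Matrix (Fin p) (Fin q) ℕ} (h : (matSupp N).Nonempty) :
    1 ≤ msuppHeight rGL N := by
  obtain ⟨x, hx⟩ := h
  have := sum_le_msuppHeight (C := {x}) (by simpa using hx)
    (by simp [IsChain, Set.pairwise_singleton])
  have hx' : 1 ≤ N x.1 x.2 := Nat.one_le_iff_ne_zero.2 hx
  simpa using hx'.trans (by simpa using this)

lemma msuppHeight_pos_iff (N : Matrix (Fin p) (Fin q) ℕ) :
    0 < msuppHeight rGL N ↔ (matSupp N).Nonempty := by
  constructor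
  · intro h
    by_contra hcon
    rw [Set.not_nonempty_iff_eq_empty] at hcon
    rw [msuppHeight_empty hcon] at h
    exact absurd h (lt_irrefl 0)
  · exact one_le_msuppHeight

end Aux

section Aux2

variable {p q : ℕ}

/-- A chain intersects the antichain `dStep` in at most one point. -/
lemma chain_inter_dStep_subsingleton {N : Matrix (Fin p) (Fin q) ℕ}
    {C : Finset (Fin p × Fin q)} (hC : IsChain rGL (↑C : Set (Fin p × Fin q)))
    {a b : Fin p × Fin q} (ha : a ∈ C) (ha' : a ∈ dStep N)
    (hb : b ∈ C) (hb' : b ∈ dStep N) : a = b := by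
  by_contra hne
  rcases hC (by exact_mod_cast ha) (by exact_mod_cast hb) hne with h | h
  · exact dStep_antichain N ha' hb' hne h
  · exact dStep_antichain N hb' ha' (Ne.symm hne) h

/-- One step of the `D`-removal, as an operation on matrices. -/
def dNextMat (N : Matrix (Fin p) (Fin q) ℕ) : Matrix (Fin p) (Fin q) ℕ :=
  fun i j => if (i, j) ∈ dStep N then N i j - 1 else N i j

lemma dMat_succ (M : Matrix (Fin p) (Fin q) ℕ) (m : ℕ) :
    dMat M (m + 1) = dNextMat (dMat M m) := rfl

lemma dNext_apply (N : Matrix (Fin p) (Fin q) ℕ) (x : Fin p × Fin q) :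
    dNextMat N x.1 x.2 = if x ∈ dStep N then N x.1 x.2 - 1 else N x.1 x.2 := by
  rcases x with ⟨i, j⟩
  rfl

lemma dNext_le (N : Matrix (Fin p) (Fin q) ℕ) (x : Fin p × Fin q) :
    dNextMat N x.1 x.2 ≤ N x.1 x.2 := by
  rw [dNext_apply]
  split <;> omega

lemma matSupp_dNext_subset (N : Matrix (Fin p) (Fin q) ℕ) :
    matSupp (dNextMat N) ⊆ matSupp N := by
  intro x hx
  have h1 : dNextMat N x.1 x.2 ≠ 0 := hx
  have := dNext_le N x
  exact fun h0 => h1 (by omega)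

/-- The height drops by exactly one at each `dStep`. -/
lemma height_dNext_step (N : Matrix (Fin p) (Fin q) ℕ)
    (hne : (matSupp N).Nonempty) :
    msuppHeight rGL (dNextMat N) + 1 = msuppHeight rGL N := by
  set h := msuppHeight rGL N with hh
  have hpos : 1 ≤ h := one_le_msuppHeight hne
  have hsupp : matSupp (dNextMat N) ⊆ matSupp N := matSupp_dNext_subset N
  -- upper bound : msuppHeight (dNextMat N) ≤ h - 1
  have hub : msuppHeight rGL (dNextMat N) ≤ h - 1 := by
    refine csSup_le (heightSet_nonempty (dNextMat N)) ?_
    rintro n ⟨C, hC, hCc, rfl⟩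
    have hCN : ↑C ⊆ matSupp N := hC.trans hsupp
    by_cases hint : ∃ a ∈ C, a ∈ dStep N
    · obtain ⟨a, haC, haD⟩ := hint
      have hstep : ∑ x ∈ C, dNextMat N x.1 x.2 + 1 ≤ ∑ x ∈ C, N x.1 x.2 := by
        rw [← Finset.sum_erase_add _ _ haC, ← Finset.sum_erase_add _ (fun x => N x.1 x.2) haC]
        have h1 : ∑ x ∈ C.erase a, dNextMat N x.1 x.2 ≤ ∑ x ∈ C.erase a, N x.1 x.2 :=
          Finset.sum_le_sum (fun x _ => dNext_le N x)
        have h2 : dNextMat N a.1 a.2 + 1 ≤ N a.1 a.2 := by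
          rw [dNext_apply, if_pos haD]
          have := haD.1
          omega
        omega
      have := sum_le_msuppHeight hCN hCc
      omega
    · push_neg at hint
      have heq : ∑ x ∈ C, dNextMat N x.1 x.2 = ∑ x ∈ C, N x.1 x.2 := by
        refine Finset.sum_congr rfl (fun x hx => ?_)
        rw [dNext_apply, if_neg (hint x hx)]
      rcases C.eq_empty_or_nonempty with rfl | hCne
      · simp
      · obtain ⟨c, hcC, hcmin⟩ := C.exists_minimal hCne
        have hcle : ∀ x ∈ C, rGL c x := by
          intro x hx
          by_cases hxc : x = c
          · exact hxc ▸ ⟨le_refl _, le_refl _⟩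
          · rcases hCc (by exact_mod_cast hcC) (by exact_mod_cast hx) (Ne.symm hxc) with hr | hr
            · exact hr
            · have : x ≤ c := (rGL_eq_le x c).1 hr
              exact absurd (le_antisymm this (hcmin hx this)) hxc
        obtain ⟨d, hdD, hdc⟩ := exists_dStep_le (hCN (by exact_mod_cast hcC))
        have hdC : d ∉ C := fun hmem => hint d hmem hdD
        have hchain : IsChain rGL (↑(insert d C) : Set (Fin p × Fin q)) := by
          rw [Finset.coe_insert]
          refine hCc.insert (fun b hb _ => Or.inl ?_)
          have h1 : d ≤ c := (rGL_eq_le d c).1 hdc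
          have h2 : c ≤ b := (rGL_eq_le c b).1 (hcle b (by exact_mod_cast hb))
          exact (rGL_eq_le d b).2 (h1.trans h2)
        have hsub : ↑(insert d C) ⊆ matSupp N := by
          rw [Finset.coe_insert]
          rintro u (rfl | hu)
          · exact hdD.1
          · exact hCN hu
        have hsum := sum_le_msuppHeight hsub hchain
        rw [Finset.sum_insert hdC] at hsum
        have hd1 : 1 ≤ N d.1 d.2 := Nat.one_le_iff_ne_zero.2 hdD.1
        omega
  -- lower bound : h - 1 ≤ msuppHeight (dNextMat N)
  have hlb : h - 1 ≤ msuppHeight rGL (dNextMat N) := by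
    obtain ⟨C, hC, hCc, hsum⟩ := msuppHeight_spec N
    set C' := C.filter (fun x => x ∈ matSupp (dNextMat N)) with hC'
    have hC'sub : ↑C' ⊆ matSupp (dNextMat N) := by
      intro x hx
      exact (Finset.mem_filter.1 (by exact_mod_cast hx)).2
    have hC'chain : IsChain rGL (↑C' : Set (Fin p × Fin q)) :=
      IsChain.mono (by exact_mod_cast Finset.filter_subset _ _) hCc
    have hsum' : ∑ x ∈ C', dNextMat N x.1 x.2 = ∑ x ∈ C, dNextMat N x.1 x.2 := by
      refine Finset.sum_subset (Finset.filter_subset _ _) (fun x hx hx' => ?_)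
      have : x ∉ matSupp (dNextMat N) := fun hmem => hx' (Finset.mem_filter.2 ⟨hx, hmem⟩)
      simpa [matSupp, Set.mem_setOf_eq, not_not] using this
    have hkey : ∑ x ∈ C, N x.1 x.2 ≤ ∑ x ∈ C, dNextMat N x.1 x.2 + 1 := by
      by_cases hint : ∃ a ∈ C, a ∈ dStep N
      · obtain ⟨a, haC, haD⟩ := hint
        rw [← Finset.sum_erase_add _ _ haC,
          ← Finset.sum_erase_add _ (fun x => dNextMat N x.1 x.2) haC]
        have h1 : ∑ x ∈ C.erase a, N x.1 x.2 = ∑ x ∈ C.erase a, dNextMat N x.1 x.2 := by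
          refine Finset.sum_congr rfl (fun x hx => ?_)
          have hxD : x ∉ dStep N := by
            intro hxD
            exact (Finset.mem_erase.1 hx).1
              (chain_inter_dStep_subsingleton hCc (Finset.mem_erase.1 hx).2 hxD haC haD)
          rw [dNext_apply, if_neg hxD]
        have h2 : N a.1 a.2 ≤ dNextMat N a.1 a.2 + 1 := by
          rw [dNext_apply, if_pos haD]
          omega
        omega
      · push_neg at hint
        have heq : ∑ x ∈ C, N x.1 x.2 = ∑ x ∈ C, dNextMat N x.1 x.2 := by
          refine Finset.sum_congr rfl (fun x hx => ?_)
          rw [dNext_apply, if_neg (hint x hx)]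
        omega
    have := sum_le_msuppHeight hC'sub hC'chain
    omega
  omega

lemma height_dMat_step (M : Matrix (Fin p) (Fin q) ℕ) (m : ℕ)
    (hne : (matSupp (dMat M m)).Nonempty) :
    msuppHeight rGL (dMat M (m + 1)) + 1 = msuppHeight rGL (dMat M m) := by
  rw [dMat_succ]
  exact height_dNext_step _ hne

lemma height_dMat (M : Matrix (Fin p) (Fin q) ℕ) (m : ℕ) :
    msuppHeight rGL (dMat M m) = msuppHeight rGL M - m := by
  induction m with
  | zero => simp [dMat]
  | succ m ih =>
    by_cases h : (matSupp (dMat M m)).Nonempty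
    · have := height_dMat_step M m h
      omega
    · have he : matSupp (dMat M m) = ∅ := Set.not_nonempty_iff_eq_empty.1 h
      have h0 : msuppHeight rGL (dMat M m) = 0 := msuppHeight_empty he
      have he' : matSupp (dMat M (m + 1)) = ∅ :=
        Set.subset_empty_iff.1 (he ▸ matSupp_dMat_succ_subset M m)
      rw [msuppHeight_empty he']
      omega

lemma dStep_nonempty_iff (M : Matrix (Fin p) (Fin q) ℕ) (m : ℕ) :
    (dStep (dMat M m)).Nonempty ↔ m < msuppHeight rGL M := by
  have h1 : (dStep (dMat M m)).Nonempty ↔ (matSupp (dMat M m)).Nonempty :=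
    ⟨fun h => h.mono (dStep_subset _), fun h => dStep_nonempty h⟩
  rw [h1, ← msuppHeight_pos_iff, height_dMat]
  omega

lemma nat_card_subtype_lt {P : ℕ → Prop} {n : ℕ} (h : ∀ m, P m ↔ m < n) :
    Nat.card {m : ℕ // P m} = n := by
  refine Nat.card_eq_of_equiv_fin ?_
  exact (Equiv.subtypeEquivRight (fun m => (h m).trans Iff.rfl)).trans Fin.equivSubtype.symm

end Aux2


/-- properties of the chain decomposition `C*_m` and the antichain
decomposition `D_m` of the multisupport of a nonzero matrix `M`.
(Here `cStep (cMat M m)` is `C*_{m+1}` and `dStep (dMat M m)` is `D_{m+1}`.) -/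
theorem statement3 (p q : ℕ) (M : Matrix (Fin p) (Fin q) ℕ) (hM : M ≠ 0) :
    -- (a)
    ((∀ m : ℕ, (cStep (cMat M m)).Nonempty →
        IsChain rGL (cStep (cMat M m)) ∧
        ∀ C : Set (Fin p × Fin q), IsChain rGL C → C ⊆ matSupp (cMat M m) →
          cStep (cMat M m) ⊆ C → C = cStep (cMat M m)) ∧
      Nat.card {m : ℕ // (cStep (cMat M m)).Nonempty} = relWidth rGL (matSupp M)) ∧
    -- (b)
    ((∀ m : ℕ, (dStep (dMat M m)).Nonempty →
        IsAntichain rGL (dStep (dMat M m)) ∧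
        ∀ A : Set (Fin p × Fin q), IsAntichain rGL A → A ⊆ matSupp (dMat M m) →
          dStep (dMat M m) ⊆ A → A = dStep (dMat M m)) ∧
      Nat.card {m : ℕ // (dStep (dMat M m)).Nonempty} = msuppHeight rGL M ∧
      ∀ m : ℕ, upIdeal (dStep (dMat M (m + 1))) ⊆ upIdeal (dStep (dMat M m))) := by
  refine ⟨⟨fun m _ => ⟨cStep_chain _, fun C hCc hCs hsub => ?_⟩, ?_⟩,
    ⟨fun m _ => ⟨dStep_antichain _, fun A hAc hAs hsub => ?_⟩, ?_, ?_⟩⟩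
  · -- maximal chain
    refine Set.Subset.antisymm (fun x hx => ?_) hsub
    by_contra hxc
    obtain ⟨z, hz, hz1, hz2⟩ := exists_cStep_incomp (hCs hx) hxc
    have hzC : z ∈ C := hsub hz
    have hne : x ≠ z := fun h => absurd (h ▸ hz1) (lt_irrefl _)
    rcases hCc hx hzC hne with h | h
    · exact absurd h.1 (not_le.2 hz1)
    · exact absurd h.2 (not_le.2 hz2)
  · exact nat_card_subtype_lt (cStep_nonempty_iff M)
  · -- maximal antichain
    refine Set.Subset.antisymm (fun a ha => ?_) hsub
    obtain ⟨d, hd, hda⟩ := exists_dStep_le (hAs ha)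
    by_cases hd' : d = a
    · exact hd' ▸ hd
    · exact absurd hda (hAc (hsub hd) ha hd')
  · exact nat_card_subtype_lt (dStep_nonempty_iff M)
  · -- upper order ideals decrease
    rintro m z ⟨x, hx, hxz⟩
    have hx' : x ∈ matSupp (dMat M m) := matSupp_dMat_succ_subset M m hx.1
    obtain ⟨d, hd, hdx⟩ := exists_dStep_le hx'
    exact ⟨d, hd, (rGL_eq_le d z).2 (((rGL_eq_le d x).1 hdx).trans ((rGL_eq_le x z).1 hxz))⟩
end
end

section
/- Let dim_ℂ V = k and let SL(V) ⊂ GL(V) be the subgroup of operators of determinant 1, acting diagonally on V^{⊗p} ⊗ (V*)^{⊗q}. Then the space of invariant tensors (V^{⊗p} ⊗ (V*)^{⊗q})^{SL(V)} is nonzero if and only if k divides p − q. -/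
/-!
STATEMENT 7: the `SL(V)`-invariants of `V^{⊗p} ⊗ (V*)^{⊗q}` are nonzero iff
`k` divides `p − q` (where `k = dim V`).
-/

open scoped Classical

noncomputable section

variable (V : Type*) [AddCommGroup V] [Module ℂ V]

/-- The factors of the tensor product `V ⊗ ⋯ ⊗ V ⊗ V* ⊗ ⋯ ⊗ V*` (`p` copies of `V`
followed by `q` copies of `V*`). -/
def TensFac (p q : ℕ) : Fin p ⊕ Fin q → Type _ :=
  fun i => Sum.elim (fun _ : Fin p => V) (fun _ : Fin q => Module.Dual ℂ V) i

instance (p q : ℕ) (i : Fin p ⊕ Fin q) : AddCommGroup (TensFac V p q i) :=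
  match i with
  | .inl _ => inferInstanceAs (AddCommGroup V)
  | .inr _ => inferInstanceAs (AddCommGroup (Module.Dual ℂ V))

instance (p q : ℕ) (i : Fin p ⊕ Fin q) : Module ℂ (TensFac V p q i) :=
  match i with
  | .inl _ => inferInstanceAs (Module ℂ V)
  | .inr _ => inferInstanceAs (Module ℂ (Module.Dual ℂ V))

/-- `V^{⊗p} ⊗ (V^*)^{⊗q}`. -/
abbrev TensPQ (p q : ℕ) := PiTensorProduct ℂ (TensFac V p q)

/-- The action of `g ∈ GL(V)` on each tensor factor: naturally on `V`, and by
`g·φ = φ ∘ g⁻¹` on `V*`. -/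
def actMap (p q : ℕ) (g : (Module.End ℂ V)ˣ) (i : Fin p ⊕ Fin q) :
    TensFac V p q i →ₗ[ℂ] TensFac V p q i :=
  match i with
  | Sum.inl _ => (↑g : Module.End ℂ V)
  | Sum.inr _ => LinearMap.dualMap (↑g⁻¹ : Module.End ℂ V)

/-- The action of `g ∈ GL(V)` on `V^{⊗p} ⊗ (V^*)^{⊗q}`. -/
def tensActPQ (p q : ℕ) (g : (Module.End ℂ V)ˣ) : TensPQ V p q →ₗ[ℂ] TensPQ V p q :=
  PiTensorProduct.map (actMap V p q g)

/-- The `SL(V)`-invariant tensors in `V^{⊗p} ⊗ (V^*)^{⊗q}`: tensors fixed by every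
invertible operator of determinant `1`. -/
def tensInvSL (p q : ℕ) : Submodule ℂ (TensPQ V p q) where
  carrier := {t | ∀ g : (Module.End ℂ V)ˣ,
    LinearMap.det (↑g : Module.End ℂ V) = 1 → tensActPQ V p q g t = t}
  add_mem' := by
    intro a c ha hc g hg
    simp only [map_add, ha g hg, hc g hg]
  zero_mem' := by intro g hg; simp
  smul_mem' := by
    intro r a ha g hg
    simp only [map_smul, ha g hg]


section Aux
open Matrix
namespace Stmt7Aux

/-- complex-valued sign of a permutation -/
def sgn {k : ℕ} (π : Equiv.Perm (Fin k)) : ℂ := ((Equiv.Perm.sign π : ℤ) : ℂ)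

/-- sign of a function if it is bijective, else 0 -/
def signIf {k : ℕ} (v : Fin k → Fin k) : ℂ :=
  if hv : Function.Bijective v then sgn (Equiv.ofBijective v hv) else 0

lemma sum_perm_M {k : ℕ} (M : Matrix (Fin k) (Fin k) ℂ) (hdet : M.det = 1)
    (v : Fin k → Fin k) :
    ∑ π : Equiv.Perm (Fin k), sgn π * ∏ c, M (v c) (π c) = signIf v := by
  have h1 : ∀ π : Equiv.Perm (Fin k), (∏ c, M (v c) (π c)) =
      ∏ c, (M.submatrix v id)ᵀ (π c) c := by
    intro π; apply Finset.prod_congr rfl; intro c _; rfl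
  have h2 : (∑ π : Equiv.Perm (Fin k), sgn π * ∏ c, M (v c) (π c)) =
      ((M.submatrix v id)ᵀ).det := by
    rw [Matrix.det_apply']
    apply Finset.sum_congr rfl
    intro π _
    rw [h1 π]; rfl
  rw [h2, Matrix.det_transpose]
  unfold signIf
  split_ifs with hv
  · have : M.submatrix v id = M.submatrix (Equiv.ofBijective v hv) id := rfl
    rw [this, Matrix.det_permute, hdet, mul_one]; rfl
  · have hvi : ¬ Function.Injective v := fun h => hv (Finite.injective_iff_bijective.mp h)
    rw [Function.not_injective_iff] at hvi
    obtain ⟨i, j, hij, hne⟩ := hvi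
    apply Matrix.det_zero_of_row_eq hne
    ext c; simp [Matrix.submatrix, hij]

lemma sum_perm_N {k : ℕ} (N : Matrix (Fin k) (Fin k) ℂ) (hdet : N.det = 1)
    (v : Fin k → Fin k) :
    ∑ π : Equiv.Perm (Fin k), sgn π * ∏ c, N (π c) (v c) = signIf v := by
  have := sum_perm_M Nᵀ (by rw [Matrix.det_transpose]; exact hdet) v
  simpa [Matrix.transpose_apply] using this

lemma sum_delta {k : ℕ} (M N : Matrix (Fin k) (Fin k) ℂ) (hMN : M * N = 1)
    (x y : Fin k) :
    ∑ d : Fin k, M x d * N d y = if x = y then 1 else 0 := by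
  have : (M * N) x y = (1 : Matrix (Fin k) (Fin k) ℂ) x y := by rw [hMN]
  rw [Matrix.mul_apply] at this
  rw [this, Matrix.one_apply]

lemma sum_perm_indicator {k : ℕ} (v : Fin k → Fin k) :
    ∑ π : Equiv.Perm (Fin k), (if ⇑π = v then sgn π else 0) = signIf v := by
  unfold signIf
  split_ifs with hv
  · rw [Finset.sum_eq_single (Equiv.ofBijective v hv)]
    · rw [if_pos]; rfl
    · intro π _ hne
      rw [if_neg]
      intro h
      exact hne (Equiv.coe_fn_injective h)
    · intro h; exact absurd (Finset.mem_univ _) h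
  · apply Finset.sum_eq_zero
    intro π _
    rw [if_neg]
    intro h
    exact hv (h ▸ π.bijective)

lemma sum_delta_indicator {k : ℕ} (x y : Fin k) :
    ∑ d : Fin k, (if d = x then (1:ℂ) else 0) * (if d = y then 1 else 0)
      = if x = y then 1 else 0 := by
  rw [Finset.sum_eq_single x]
  · simp [eq_comm]
  · intro d _ hd; simp [hd]
  · intro h; exact absurd (Finset.mem_univ _) h

lemma sum_fun_prod {α β : Type*} [Fintype α] [Fintype β] [DecidableEq α] (F : α → β → ℂ) :
    ∑ g : α → β, ∏ a, F a (g a) = ∏ a, ∑ b, F a b := by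
  rw [Finset.prod_univ_sum]
  exact (Finset.sum_congr (by rw [Fintype.piFinset_univ]) (fun _ _ => rfl)).symm

lemma sum_triple {A B C : Type*} [Fintype A] [Fintype B] [Fintype C]
    (FA : A → ℂ) (FB : B → ℂ) (FC : C → ℂ) :
    ∑ a : A, ∑ b : B, ∑ c : C, FA a * FB b * FC c
      = (∑ a, FA a) * (∑ b, FB b) * (∑ c, FC c) := by
  simp only [← Finset.sum_mul, ← Finset.mul_sum, mul_assoc]

end Stmt7Aux

namespace Stmt7Aux

variable {k m n s : ℕ}

/-- the index type for the big sum defining the invariant tensor -/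
abbrev SIdx (k m n s : ℕ) :=
  (Fin m → Equiv.Perm (Fin k)) × (Fin n → Equiv.Perm (Fin k)) × (Fin s → Fin k)

set_option maxHeartbeats 1000000 in
lemma key_scalar (M N : Matrix (Fin k) (Fin k) ℂ)
    (hdM : M.det = 1) (hdN : N.det = 1) (hMN : M * N = 1)
    (rL : Fin m → Fin k → Fin k) (rR : Fin n → Fin k → Fin k)
    (rLs rRs : Fin s → Fin k) :
    ∑ x : SIdx k m n s, ((∏ a, sgn (x.1 a)) * ∏ a, sgn (x.2.1 a)) *
      ((∏ a, ∏ c, M (rL a c) (x.1 a c)) * (∏ j, M (rLs j) (x.2.2 j)) *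
       ((∏ a, ∏ c, N (x.2.1 a c) (rR a c)) * (∏ j, N (x.2.2 j) (rRs j))))
    = ∑ x : SIdx k m n s,
        if (∀ a, ⇑(x.1 a) = rL a) ∧ (∀ a, ⇑(x.2.1 a) = rR a) ∧
           (∀ j, x.2.2 j = rLs j) ∧ (∀ j, x.2.2 j = rRs j)
        then (∏ a, sgn (x.1 a)) * ∏ a, sgn (x.2.1 a) else 0 := by
  have hL : ∀ x : SIdx k m n s,
      ((∏ a, sgn (x.1 a)) * ∏ a, sgn (x.2.1 a)) *
      ((∏ a, ∏ c, M (rL a c) (x.1 a c)) * (∏ j, M (rLs j) (x.2.2 j)) *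
       ((∏ a, ∏ c, N (x.2.1 a c) (rR a c)) * (∏ j, N (x.2.2 j) (rRs j))))
      = (∏ a, (sgn (x.1 a) * ∏ c, M (rL a c) (x.1 a c))) *
        (∏ a, (sgn (x.2.1 a) * ∏ c, N (x.2.1 a c) (rR a c))) *
        (∏ j, (M (rLs j) (x.2.2 j) * N (x.2.2 j) (rRs j))) := by
    intro x
    simp only [Finset.prod_mul_distrib]
    ring
  have hR : ∀ x : SIdx k m n s,
      (if (∀ a, ⇑(x.1 a) = rL a) ∧ (∀ a, ⇑(x.2.1 a) = rR a) ∧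
           (∀ j, x.2.2 j = rLs j) ∧ (∀ j, x.2.2 j = rRs j)
        then (∏ a, sgn (x.1 a)) * ∏ a, sgn (x.2.1 a) else 0)
      = (∏ a, (if ⇑(x.1 a) = rL a then sgn (x.1 a) else 0)) *
        (∏ a, (if ⇑(x.2.1 a) = rR a then sgn (x.2.1 a) else 0)) *
        (∏ j, ((if x.2.2 j = rLs j then (1:ℂ) else 0) *
               (if x.2.2 j = rRs j then (1:ℂ) else 0))) := by
    intro x
    by_cases h1 : ∀ a, ⇑(x.1 a) = rL a
    · by_cases h2 : ∀ a, ⇑(x.2.1 a) = rR a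
      · by_cases h3 : ∀ j, x.2.2 j = rLs j
        · by_cases h4 : ∀ j, x.2.2 j = rRs j
          · rw [if_pos ⟨h1, h2, h3, h4⟩]
            have h5 : ∀ j, rLs j = rRs j := fun j => (h3 j).symm.trans (h4 j)
            simp [h1, h2, h3, h5]
          · rw [if_neg (by tauto)]
            obtain ⟨j, hj⟩ := not_forall.mp h4
            have hz : (∏ j, ((if x.2.2 j = rLs j then (1:ℂ) else 0) *
               (if x.2.2 j = rRs j then (1:ℂ) else 0))) = 0 :=
              Finset.prod_eq_zero (Finset.mem_univ j) (by rw [if_neg hj, mul_zero])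
            rw [hz]; ring
        · rw [if_neg (by tauto)]
          obtain ⟨j, hj⟩ := not_forall.mp h3
          have hz : (∏ j, ((if x.2.2 j = rLs j then (1:ℂ) else 0) *
             (if x.2.2 j = rRs j then (1:ℂ) else 0))) = 0 :=
            Finset.prod_eq_zero (Finset.mem_univ j) (by rw [if_neg hj, zero_mul])
          rw [hz]; ring
      · rw [if_neg (by tauto)]
        obtain ⟨a, ha⟩ := not_forall.mp h2
        have hz : (∏ a, (if ⇑(x.2.1 a) = rR a then sgn (x.2.1 a) else 0)) = 0 :=
          Finset.prod_eq_zero (Finset.mem_univ a) (if_neg ha)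
        rw [hz]; ring
    · rw [if_neg (by tauto)]
      obtain ⟨a, ha⟩ := not_forall.mp h1
      have hz : (∏ a, (if ⇑(x.1 a) = rL a then sgn (x.1 a) else 0)) = 0 :=
        Finset.prod_eq_zero (Finset.mem_univ a) (if_neg ha)
      rw [hz]; ring
  rw [Finset.sum_congr rfl (fun x _ => hL x), Finset.sum_congr rfl (fun x _ => hR x)]
  simp only [Fintype.sum_prod_type]
  rw [sum_triple]
  rw [show (∑ x : Fin m → Equiv.Perm (Fin k),
      ∑ y : Fin n → Equiv.Perm (Fin k),
        ∑ f : Fin s → Fin k,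
          ((∏ a, if ⇑(x a) = rL a then sgn (x a) else 0) *
              ∏ a, if ⇑(y a) = rR a then sgn (y a) else 0) *
            ∏ j, (if f j = rLs j then (1:ℂ) else 0) * if f j = rRs j then 1 else 0)
      = (∑ x : Fin m → Equiv.Perm (Fin k), ∏ a, if ⇑(x a) = rL a then sgn (x a) else 0) *
        (∑ y : Fin n → Equiv.Perm (Fin k), ∏ a, if ⇑(y a) = rR a then sgn (y a) else 0) *
        (∑ f : Fin s → Fin k, ∏ j, (if f j = rLs j then (1:ℂ) else 0) * if f j = rRs j then 1 else 0)
    from sum_triple _ _ _]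
  have f1 : (∑ x : Fin m → Equiv.Perm (Fin k), ∏ a, (sgn (x a) * ∏ c, M (rL a c) (x a c)))
      = ∏ a, signIf (rL a) :=
    (sum_fun_prod fun a π => sgn π * ∏ c, M (rL a c) (π c)).trans
      (Finset.prod_congr rfl fun a _ => sum_perm_M M hdM (rL a))
  have f2 : (∑ x : Fin n → Equiv.Perm (Fin k), ∏ a, (sgn (x a) * ∏ c, N (x a c) (rR a c)))
      = ∏ a, signIf (rR a) :=
    (sum_fun_prod fun a π => sgn π * ∏ c, N (π c) (rR a c)).trans
      (Finset.prod_congr rfl fun a _ => sum_perm_N N hdN (rR a))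
  have f3 : (∑ f : Fin s → Fin k, ∏ j, (M (rLs j) (f j) * N (f j) (rRs j)))
      = ∏ j, if rLs j = rRs j then (1:ℂ) else 0 :=
    (sum_fun_prod fun j d => M (rLs j) d * N d (rRs j)).trans
      (Finset.prod_congr rfl fun j _ => sum_delta M N hMN _ _)
  have g1 : (∑ x : Fin m → Equiv.Perm (Fin k), ∏ a, (if ⇑(x a) = rL a then sgn (x a) else 0))
      = ∏ a, signIf (rL a) :=
    (sum_fun_prod fun a (π : Equiv.Perm (Fin k)) => if ⇑π = rL a then sgn π else 0).trans
      (Finset.prod_congr rfl fun a _ => sum_perm_indicator (rL a))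
  have g2 : (∑ x : Fin n → Equiv.Perm (Fin k), ∏ a, (if ⇑(x a) = rR a then sgn (x a) else 0))
      = ∏ a, signIf (rR a) :=
    (sum_fun_prod fun a (π : Equiv.Perm (Fin k)) => if ⇑π = rR a then sgn π else 0).trans
      (Finset.prod_congr rfl fun a _ => sum_perm_indicator (rR a))
  have g3 : (∑ f : Fin s → Fin k, ∏ j, ((if f j = rLs j then (1:ℂ) else 0) *
        (if f j = rRs j then (1:ℂ) else 0)))
      = ∏ j, if rLs j = rRs j then (1:ℂ) else 0 :=
    (sum_fun_prod fun j d => (if d = rLs j then (1:ℂ) else 0) * (if d = rRs j then 1 else 0)).trans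
      (Finset.prod_congr rfl fun j _ => sum_delta_indicator _ _)
  rw [f1, f2, f3, g1, g2, g3]

end Stmt7Aux

namespace Stmt7Aux

/-- the weight (product of signs) -/
def wgt {k m n s : ℕ} (x : SIdx k m n s) : ℂ :=
  (∏ a, sgn (x.1 a)) * ∏ a, sgn (x.2.1 a)

/-- encoding of the index set of the `V` (resp. `V*`) factors -/
def enc (k m s : ℕ) : (Fin m × Fin k) ⊕ Fin s ≃ Fin (m * k + s) :=
  (Equiv.sumCongr finProdFinEquiv (Equiv.refl (Fin s))).trans finSumFinEquiv

/-- the index function of basis pure tensors in the invariant tensor -/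
def rho (k m n s : ℕ) (x : SIdx k m n s) : Fin (m*k+s) ⊕ Fin (n*k+s) → Fin k
  | .inl i => Sum.elim (fun ac => x.1 ac.1 ac.2) x.2.2 ((enc k m s).symm i)
  | .inr i => Sum.elim (fun ac => x.2.1 ac.1 ac.2) x.2.2 ((enc k n s).symm i)

@[simp] lemma rho_L (k m n s : ℕ) (x : SIdx k m n s) (a : Fin m) (c : Fin k) :
    rho k m n s x (.inl (enc k m s (.inl (a, c)))) = x.1 a c := by
  simp [rho]

@[simp] lemma rho_Ls (k m n s : ℕ) (x : SIdx k m n s) (j : Fin s) :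
    rho k m n s x (.inl (enc k m s (.inr j))) = x.2.2 j := by
  simp [rho]

@[simp] lemma rho_R (k m n s : ℕ) (x : SIdx k m n s) (a : Fin n) (c : Fin k) :
    rho k m n s x (.inr (enc k n s (.inl (a, c)))) = x.2.1 a c := by
  simp [rho]

@[simp] lemma rho_Rs (k m n s : ℕ) (x : SIdx k m n s) (j : Fin s) :
    rho k m n s x (.inr (enc k n s (.inr j))) = x.2.2 j := by
  simp [rho]

lemma rho_inj (k m n s : ℕ) : Function.Injective (rho k m n s) := by
  intro x y h
  have h1 : x.1 = y.1 := funext fun a => Equiv.ext fun c => by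
    have := congrFun h (.inl (enc k m s (.inl (a, c)))); rwa [rho_L, rho_L] at this
  have h2 : x.2.1 = y.2.1 := funext fun a => Equiv.ext fun c => by
    have := congrFun h (.inr (enc k n s (.inl (a, c)))); rwa [rho_R, rho_R] at this
  have h3 : x.2.2 = y.2.2 := funext fun j => by
    have := congrFun h (.inl (enc k m s (.inr j))); rwa [rho_Ls, rho_Ls] at this
  exact Prod.ext h1 (Prod.ext h2 h3)

/-- equivalent pointwise description of `rho x = r` -/
lemma rho_eq_iff (k m n s : ℕ) (x : SIdx k m n s)
    (r : Fin (m*k+s) ⊕ Fin (n*k+s) → Fin k) :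
    rho k m n s x = r ↔
      (∀ a, ⇑(x.1 a) = fun c => r (.inl (enc k m s (.inl (a, c))))) ∧
      (∀ a, ⇑(x.2.1 a) = fun c => r (.inr (enc k n s (.inl (a, c))))) ∧
      (∀ j, x.2.2 j = r (.inl (enc k m s (.inr j)))) ∧
      (∀ j, x.2.2 j = r (.inr (enc k n s (.inr j)))) := by
  constructor
  · intro h
    refine ⟨fun a => funext fun c => ?_, fun a => funext fun c => ?_, fun j => ?_, fun j => ?_⟩ <;>
      rw [← h] <;> simp
  · rintro ⟨h1, h2, h3, h4⟩
    funext i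
    cases i with
    | inl i =>
      obtain ⟨u, hu⟩ : ∃ u, enc k m s u = i := ⟨(enc k m s).symm i, (enc k m s).apply_symm_apply i⟩
      subst hu
      cases u with
      | inl ac => rw [rho_L, congrFun (h1 ac.1) ac.2]
      | inr j => rw [rho_Ls, h3 j]
    | inr i =>
      obtain ⟨u, hu⟩ : ∃ u, enc k n s u = i := ⟨(enc k n s).symm i, (enc k n s).apply_symm_apply i⟩
      subst hu
      cases u with
      | inl ac => rw [rho_R, congrFun (h2 ac.1) ac.2]
      | inr j => rw [rho_Rs, h4 j]

/-- the coefficient function of the action of `g` in the basis -/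
def cf {k : ℕ} (p q : ℕ) (M N : Matrix (Fin k) (Fin k) ℂ)
    (r' : Fin p ⊕ Fin q → Fin k) : (i : Fin p ⊕ Fin q) → Fin k → ℂ
  | .inl i => fun d => M d (r' (.inl i))
  | .inr i => fun d => N (r' (.inr i)) d

end Stmt7Aux

open Stmt7Aux

/-- basis vectors of the tensor factors -/
def bvec {k : ℕ} (b : Module.Basis (Fin k) ℂ V) (p q : ℕ) :
    (i : Fin p ⊕ Fin q) → Fin k → TensFac V p q i
  | .inl _ => fun c => b c
  | .inr _ => fun c => b.coord c

/-- pure tensors of basis vectors -/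
def Bv {k : ℕ} (b : Module.Basis (Fin k) ℂ V) {p q : ℕ} (r : Fin p ⊕ Fin q → Fin k) :
    TensPQ V p q :=
  PiTensorProduct.tprod ℂ fun i => bvec V b p q i (r i)

/-- the invariant tensor -/
def invT (k m n s : ℕ) (b : Module.Basis (Fin k) ℂ V) : TensPQ V (m*k+s) (n*k+s) :=
  ∑ x : SIdx k m n s, wgt x • Bv V b (rho k m n s x)

/-- evaluation functional at a multi-index -/
def chi {k : ℕ} (b : Module.Basis (Fin k) ℂ V) (p q : ℕ) :
    (i : Fin p ⊕ Fin q) → Fin k → (TensFac V p q i →ₗ[ℂ] ℂ)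
  | .inl _ => fun c => b.coord c
  | .inr _ => fun c => Module.Dual.eval ℂ V (b c)

def evalAt {k : ℕ} (b : Module.Basis (Fin k) ℂ V) {p q : ℕ} (r : Fin p ⊕ Fin q → Fin k) :
    TensPQ V p q →ₗ[ℂ] ℂ :=
  PiTensorProduct.lift
    ((MultilinearMap.mkPiAlgebra ℂ (Fin p ⊕ Fin q) ℂ).compLinearMap
      (fun i => chi V b p q i (r i)))

lemma evalAt_Bv {k : ℕ} (b : Module.Basis (Fin k) ℂ V) {p q : ℕ}
    (r r' : Fin p ⊕ Fin q → Fin k) :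
    evalAt V b r (Bv V b r') = if r' = r then 1 else 0 := by
  unfold evalAt Bv
  rw [PiTensorProduct.lift.tprod, MultilinearMap.compLinearMap_apply,
    MultilinearMap.mkPiAlgebra_apply]
  have hpt : ∀ i, chi V b p q i (r i) (bvec V b p q i (r' i))
      = if r' i = r i then (1:ℂ) else 0 := by
    intro i
    cases i with
    | inl i =>
      show b.coord (r (.inl i)) (b (r' (.inl i))) = _
      rw [Module.Basis.coord_apply, Module.Basis.repr_self_apply]
    | inr i =>
      show (b.coord (r' (.inr i))) (b (r (.inr i))) = _
      rw [Module.Basis.coord_apply, Module.Basis.repr_self_apply]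
      simp [eq_comm]
  rw [Finset.prod_congr rfl (fun i _ => hpt i)]
  by_cases h : r' = r
  · subst h; simp
  · rw [if_neg h]
    have : ∃ i, r' i ≠ r i := by
      by_contra hc; push_neg at hc; exact h (funext hc)
    obtain ⟨i, hi⟩ := this
    exact Finset.prod_eq_zero (Finset.mem_univ i) (if_neg hi)

lemma invT_ne_zero (k m n s : ℕ) (hk : 0 < k) (b : Module.Basis (Fin k) ℂ V) :
    invT V k m n s b ≠ 0 := by
  intro h0
  set x₀ : SIdx k m n s := (fun _ => 1, fun _ => 1, fun _ => ⟨0, hk⟩) with hx₀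
  have := congrArg (evalAt V b (rho k m n s x₀)) h0
  rw [map_zero] at this
  unfold invT at this
  rw [map_sum] at this
  have heval : ∀ x : SIdx k m n s,
      evalAt V b (rho k m n s x₀) (wgt x • Bv V b (rho k m n s x))
        = if x = x₀ then wgt x else 0 := by
    intro x
    rw [_root_.map_smul, smul_eq_mul, evalAt_Bv]
    by_cases hx : x = x₀
    · rw [if_pos (by rw [hx]), if_pos hx, mul_one]
    · rw [if_neg (fun hh => hx (rho_inj k m n s hh)), if_neg hx, mul_zero]
  rw [Finset.sum_congr rfl (fun x _ => heval x), Finset.sum_ite_eq' Finset.univ x₀] at this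
  simp only [Finset.mem_univ, if_true] at this
  have hw : wgt x₀ = 1 := by
    simp [wgt, hx₀, sgn]
  rw [hw] at this
  exact one_ne_zero this


lemma act_Bv (k p q : ℕ) (b : Module.Basis (Fin k) ℂ V) (g : (Module.End ℂ V)ˣ)
    (M N : Matrix (Fin k) (Fin k) ℂ)
    (hM : ∀ j, (↑g : Module.End ℂ V) (b j) = ∑ d, M d j • b d)
    (hN : ∀ j, LinearMap.dualMap (↑g⁻¹ : Module.End ℂ V) (b.coord j)
            = ∑ d, N j d • b.coord d)
    (r' : Fin p ⊕ Fin q → Fin k) :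
    tensActPQ V p q g (Bv V b r')
      = ∑ r : Fin p ⊕ Fin q → Fin k, (∏ i, cf p q M N r' i (r i)) • Bv V b r := by
  unfold tensActPQ Bv
  rw [PiTensorProduct.map_tprod]
  have h1 : (fun i => actMap V p q g i (bvec V b p q i (r' i)))
      = fun i => ∑ d, cf p q M N r' i d • bvec V b p q i d := by
    funext i
    cases i with
    | inl i => exact hM (r' (.inl i))
    | inr i => exact hN (r' (.inr i))
  rw [h1, MultilinearMap.map_sum]
  exact Finset.sum_congr rfl fun r _ => MultilinearMap.map_smul_univ _ _ _


lemma invT_mem (k m n s : ℕ) (b : Module.Basis (Fin k) ℂ V) :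
    invT V k m n s b ∈ tensInvSL V (m*k+s) (n*k+s) := by
  intro g hg
  set M := LinearMap.toMatrix b b (↑g : Module.End ℂ V) with hMdef
  set N := LinearMap.toMatrix b b (↑g⁻¹ : Module.End ℂ V) with hNdef
  have hMN : M * N = 1 := by
    rw [hMdef, hNdef, ← LinearMap.toMatrix_mul, Units.mul_inv, LinearMap.toMatrix_one]
  have hdM : M.det = 1 := by rw [hMdef, LinearMap.det_toMatrix]; exact hg
  have hdN : N.det = 1 := by
    have h2 := congrArg Matrix.det hMN
    rwa [Matrix.det_mul, hdM, one_mul, Matrix.det_one] at h2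
  have hM : ∀ j, (↑g : Module.End ℂ V) (b j) = ∑ d, M d j • b d := by
    intro j
    conv_lhs => rw [← b.sum_repr ((↑g : Module.End ℂ V) (b j))]
    exact Finset.sum_congr rfl fun d _ => by rw [hMdef, LinearMap.toMatrix_apply]
  have hN : ∀ j, LinearMap.dualMap (↑g⁻¹ : Module.End ℂ V) (b.coord j)
      = ∑ d, N j d • b.coord d := by
    intro j
    refine b.ext fun i => ?_
    have lhs : (LinearMap.dualMap (↑g⁻¹ : Module.End ℂ V) (b.coord j)) (b i) = N j i := by
      rw [LinearMap.dualMap_apply, Module.Basis.coord_apply, hNdef, LinearMap.toMatrix_apply]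
    have rhs : (∑ d, N j d • b.coord d) (b i) = N j i := by
      simp [Module.Basis.coord_apply, Module.Basis.repr_self_apply, Finsupp.single_apply, mul_ite,
        mul_one, mul_zero, Finset.sum_ite_eq]
    rw [lhs, rhs]
  have hprod : ∀ (x : SIdx k m n s) (r : Fin (m*k+s) ⊕ Fin (n*k+s) → Fin k),
      (∏ i, cf (m*k+s) (n*k+s) M N (rho k m n s x) i (r i))
      = (∏ a, ∏ c, M (r (.inl (enc k m s (.inl (a,c))))) (x.1 a c)) *
          (∏ j, M (r (.inl (enc k m s (.inr j)))) (x.2.2 j)) *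
        ((∏ a, ∏ c, N (x.2.1 a c) (r (.inr (enc k n s (.inl (a,c)))))) *
          (∏ j, N (x.2.2 j) (r (.inr (enc k n s (.inr j)))))) := by
    intro x r
    rw [Fintype.prod_sum_type]
    congr 1
    · rw [← Equiv.prod_comp (enc k m s)
        (fun i => cf (m*k+s) (n*k+s) M N (rho k m n s x) (.inl i) (r (.inl i)))]
      rw [Fintype.prod_sum_type]
      congr 1
      · rw [Fintype.prod_prod_type]
        refine Finset.prod_congr rfl fun a _ => Finset.prod_congr rfl fun c _ => ?_
        show M (r (.inl (enc k m s (.inl (a,c)))))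
            (rho k m n s x (.inl (enc k m s (.inl (a,c))))) = _
        rw [rho_L]
      · refine Finset.prod_congr rfl fun j _ => ?_
        show M (r (.inl (enc k m s (.inr j))))
            (rho k m n s x (.inl (enc k m s (.inr j)))) = _
        rw [rho_Ls]
    · rw [← Equiv.prod_comp (enc k n s)
        (fun i => cf (m*k+s) (n*k+s) M N (rho k m n s x) (.inr i) (r (.inr i)))]
      rw [Fintype.prod_sum_type]
      congr 1
      · rw [Fintype.prod_prod_type]
        refine Finset.prod_congr rfl fun a _ => Finset.prod_congr rfl fun c _ => ?_
        show N (rho k m n s x (.inr (enc k n s (.inl (a,c)))))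
            (r (.inr (enc k n s (.inl (a,c))))) = _
        rw [rho_R]
      · refine Finset.prod_congr rfl fun j _ => ?_
        show N (rho k m n s x (.inr (enc k n s (.inr j))))
            (r (.inr (enc k n s (.inr j)))) = _
        rw [rho_Rs]
  have hscal : ∀ r : Fin (m*k+s) ⊕ Fin (n*k+s) → Fin k,
      (∑ x : SIdx k m n s, wgt x * ∏ i, cf (m*k+s) (n*k+s) M N (rho k m n s x) i (r i))
      = ∑ x : SIdx k m n s, if rho k m n s x = r then wgt x else 0 := by
    intro r
    have hkey := key_scalar M N hdM hdN hMN
      (fun a c => r (.inl (enc k m s (.inl (a,c)))))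
      (fun a c => r (.inr (enc k n s (.inl (a,c)))))
      (fun j => r (.inl (enc k m s (.inr j))))
      (fun j => r (.inr (enc k n s (.inr j))))
    calc (∑ x : SIdx k m n s, wgt x * ∏ i, cf (m*k+s) (n*k+s) M N (rho k m n s x) i (r i))
        = ∑ x : SIdx k m n s, ((∏ a, sgn (x.1 a)) * ∏ a, sgn (x.2.1 a)) *
            ((∏ a, ∏ c, M (r (.inl (enc k m s (.inl (a,c))))) (x.1 a c)) *
              (∏ j, M (r (.inl (enc k m s (.inr j)))) (x.2.2 j)) *
            ((∏ a, ∏ c, N (x.2.1 a c) (r (.inr (enc k n s (.inl (a,c)))))) *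
              (∏ j, N (x.2.2 j) (r (.inr (enc k n s (.inr j))))))) := by
          exact Finset.sum_congr rfl fun x _ => by rw [hprod x r]; rfl
      _ = ∑ x : SIdx k m n s,
            if (∀ a, ⇑(x.1 a) = fun c => r (.inl (enc k m s (.inl (a, c))))) ∧
               (∀ a, ⇑(x.2.1 a) = fun c => r (.inr (enc k n s (.inl (a, c))))) ∧
               (∀ j, x.2.2 j = r (.inl (enc k m s (.inr j)))) ∧
               (∀ j, x.2.2 j = r (.inr (enc k n s (.inr j))))
            then (∏ a, sgn (x.1 a)) * ∏ a, sgn (x.2.1 a) else 0 := hkey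
      _ = ∑ x : SIdx k m n s, if rho k m n s x = r then wgt x else 0 := by
          refine Finset.sum_congr rfl fun x _ => ?_
          rw [if_congr (rho_eq_iff k m n s x r).symm rfl rfl]
          rfl
  show tensActPQ V (m*k+s) (n*k+s) g (invT V k m n s b) = invT V k m n s b
  unfold invT
  rw [map_sum]
  calc (∑ x : SIdx k m n s, tensActPQ V (m*k+s) (n*k+s) g (wgt x • Bv V b (rho k m n s x)))
      = ∑ x : SIdx k m n s, ∑ r : Fin (m*k+s) ⊕ Fin (n*k+s) → Fin k,
          (wgt x * ∏ i, cf (m*k+s) (n*k+s) M N (rho k m n s x) i (r i)) • Bv V b r := by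
        refine Finset.sum_congr rfl fun x _ => ?_
        rw [_root_.map_smul, act_Bv V k (m*k+s) (n*k+s) b g M N hM hN, Finset.smul_sum]
        exact Finset.sum_congr rfl fun r _ => by rw [smul_smul]
    _ = ∑ r : Fin (m*k+s) ⊕ Fin (n*k+s) → Fin k,
          (∑ x : SIdx k m n s, wgt x * ∏ i, cf (m*k+s) (n*k+s) M N (rho k m n s x) i (r i))
            • Bv V b r := by
        rw [Finset.sum_comm]
        exact Finset.sum_congr rfl fun r _ => (Finset.sum_smul).symm
    _ = ∑ r : Fin (m*k+s) ⊕ Fin (n*k+s) → Fin k,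
          (∑ x : SIdx k m n s, if rho k m n s x = r then wgt x else 0) • Bv V b r := by
        exact Finset.sum_congr rfl fun r _ => by rw [hscal r]
    _ = ∑ x : SIdx k m n s, wgt x • Bv V b (rho k m n s x) := by
        rw [Finset.sum_congr rfl
          (fun r (_ : r ∈ Finset.univ) => (Finset.sum_smul :
            (∑ x : SIdx k m n s, if rho k m n s x = r then wgt x else 0) • Bv V b r = _)),
          Finset.sum_comm]
        refine Finset.sum_congr rfl fun x _ => ?_
        simp only [ite_smul, zero_smul, Finset.sum_ite_eq, Finset.mem_univ, if_true]


lemma inv_ne_bot (k m n s p q : ℕ) (hk : 0 < k) (b : Module.Basis (Fin k) ℂ V)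
    (hp : p = m * k + s) (hq : q = n * k + s) : tensInvSL V p q ≠ ⊥ := by
  subst hp; subst hq
  rw [Submodule.ne_bot_iff]
  exact ⟨invT V k m n s b, invT_mem V k m n s b, invT_ne_zero V k m n s hk b⟩

theorem statement7 (k p q : ℕ) (hk : 0 < k) [FiniteDimensional ℂ V]
    (hV : Module.finrank ℂ V = k) :
    tensInvSL V p q ≠ ⊥ ↔ (k : ℤ) ∣ ((p : ℤ) - (q : ℤ)) := by
  constructor
  · intro hne
    obtain ⟨t, htmem, ht0⟩ := (Submodule.ne_bot_iff _).mp hne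
    set c := Complex.exp (2 * Real.pi * Complex.I / k) with hcdef
    have hroot : IsPrimitiveRoot c k := Complex.isPrimitiveRoot_exp k hk.ne'
    have hc0 : c ≠ 0 := Complex.exp_ne_zero _
    set u : (Module.End ℂ V)ˣ :=
      { val := c • (1 : Module.End ℂ V)
        inv := c⁻¹ • (1 : Module.End ℂ V)
        val_inv := by
          refine LinearMap.ext fun w => ?_
          simp [Module.End.mul_apply, smul_smul, mul_inv_cancel₀ hc0, inv_mul_cancel₀ hc0]
        inv_val := by
          refine LinearMap.ext fun w => ?_
          simp [Module.End.mul_apply, smul_smul, mul_inv_cancel₀ hc0, inv_mul_cancel₀ hc0] } with hudef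
    have hdet : LinearMap.det (↑u : Module.End ℂ V) = 1 := by
      show LinearMap.det (c • (1 : Module.End ℂ V)) = 1
      rw [LinearMap.det_smul, hV]
      simp [hroot.pow_eq_one]
    have hact := htmem u hdet
    have hmap : tensActPQ V p q u
        = (c ^ p * c⁻¹ ^ q) • (LinearMap.id : TensPQ V p q →ₗ[ℂ] TensPQ V p q) := by
      apply PiTensorProduct.ext
      apply MultilinearMap.ext
      intro v
      simp only [LinearMap.compMultilinearMap_apply, LinearMap.smul_apply, LinearMap.id_apply]
      unfold tensActPQ
      rw [PiTensorProduct.map_tprod]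
      have hv : (fun i => actMap V p q u i (v i))
          = fun i => (Sum.elim (fun _ : Fin p => c) (fun _ : Fin q => c⁻¹) i) • v i := by
        funext i
        cases i with
        | inl i =>
          show (c • (1 : Module.End ℂ V)) (v (.inl i)) = c • v (.inl i)
          rfl
        | inr i =>
          show LinearMap.dualMap (c⁻¹ • (1 : Module.End ℂ V)) (v (.inr i))
              = c⁻¹ • v (.inr i)
          refine LinearMap.ext fun w => ?_
          exact (v (.inr i) : Module.Dual ℂ V).map_smul c⁻¹ w
      rw [hv, MultilinearMap.map_smul_univ]
      congr 1
      rw [Fintype.prod_sum_type]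
      simp [Finset.prod_const, Finset.card_univ]
    rw [hmap, LinearMap.smul_apply, LinearMap.id_apply] at hact
    have h2 : c ^ p * c⁻¹ ^ q = 1 :=
      smul_left_injective ℂ ht0
        (show (c ^ p * c⁻¹ ^ q) • t = (1:ℂ) • t by rw [hact, one_smul])
    have h3 : c ^ ((p:ℤ) - (q:ℤ)) = 1 := by
      rw [zpow_sub₀ hc0, zpow_natCast, zpow_natCast, div_eq_mul_inv, ← inv_pow]
      exact h2
    exact (hroot.zpow_eq_one_iff_dvd _).mp h3
  · intro hdvd
    have b : Module.Basis (Fin k) ℂ V := Module.finBasisOfFinrankEq ℂ V hV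
    by_cases hpq : q ≤ p
    · have h1 : k ∣ p - q :=
        Int.natCast_dvd_natCast.mp (by rw [Nat.cast_sub hpq]; exact hdvd)
      obtain ⟨m, hm⟩ := h1
      have hp : p = m * k + q := by rw [mul_comm]; exact Nat.eq_add_of_sub_eq hpq hm
      exact inv_ne_bot V k m 0 q p q hk b hp (by omega)
    · push_neg at hpq
      have h2 : (k:ℤ) ∣ (q:ℤ) - (p:ℤ) := by
        have := dvd_neg.mpr hdvd; rwa [neg_sub] at this
      have h1 : k ∣ q - p :=
        Int.natCast_dvd_natCast.mp (by rw [Nat.cast_sub hpq.le]; exact h2)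
      obtain ⟨n, hn⟩ := h1
      have hq : q = n * k + p := by rw [mul_comm]; exact Nat.eq_add_of_sub_eq hpq.le hn
      exact inv_ne_bot V k 0 n p p q hk b (by omega) hq
end Aux
end
end
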